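/- There are no primes p, q with σ⁺(p²q) = 2(p²q + 1), where for distinct primes p, q, σ⁺(p²q) = (2 + p + p²)(2 + q). -/

import Mathlib

/-- Sum of positive divisors. -/
def sigma (n : ℕ) : ℕ := ∑ d ∈ n.divisors, d

/-- σ⁺(n) = ∏_{p ∣ n} (σ(p^{v_p(n)}) + 1). -/
def sigmaPlus (n : ℕ) : ℕ := ∏ p ∈ n.primeFactors, (sigma (p ^ n.factorization p) + 1)

/-- φ⁺(n) = ∏_{p ∣ n} (φ(p^{v_p(n)}) + 1). -/
def phiPlus (n : ℕ) : ℕ := ∏ p ∈ n.primeFactors, (Nat.totient (p ^ n.factorization p) + 1)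

lemma sigma_sq {p : ℕ} (hp : p.Prime) : sigma (p ^ 2) = 1 + p + p ^ 2 := by
  unfold sigma
  rw [Nat.sum_divisors_prime_pow hp]
  simp [Finset.sum_range_succ]

lemma sigma_cube {p : ℕ} (hp : p.Prime) : sigma (p ^ 3) = 1 + p + p ^ 2 + p ^ 3 := by
  unfold sigma
  rw [Nat.sum_divisors_prime_pow hp]
  simp [Finset.sum_range_succ]

lemma sigma_prime {p : ℕ} (hp : p.Prime) : sigma p = 1 + p := by
  unfold sigma
  rw [hp.sum_divisors, Nat.add_comm]

lemma sigmaPlus_p2q {p q : ℕ} (hp : p.Prime) (hq : q.Prime) (hne : p ≠ q) :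
    sigmaPlus (p ^ 2 * q) = (2 + p + p ^ 2) * (2 + q) := by
  unfold sigmaPlus
  have hfac : (p ^ 2 * q).primeFactors = {p, q} := by
    rw [Nat.primeFactors_mul (pow_ne_zero 2 hp.pos.ne') hq.pos.ne',
      Nat.primeFactors_prime_pow (by norm_num) hp, hq.primeFactors]
    rfl
  have hf : (p ^ 2 * q).factorization = (p ^ 2).factorization + q.factorization :=
    Nat.factorization_mul (pow_ne_zero 2 hp.pos.ne') hq.pos.ne'
  have hfp : (p ^ 2 * q).factorization p = 2 := by
    rw [hf]; simp [hp.factorization_pow, hq.factorization, Finsupp.single_apply, hne.symm]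
  have hfq : (p ^ 2 * q).factorization q = 1 := by
    rw [hf]; simp [hp.factorization_pow, hq.factorization, Finsupp.single_apply, hne]
  rw [hfac, Finset.prod_insert (by simpa using hne), Finset.prod_singleton, hfp, hfq,
    sigma_sq hp, pow_one, sigma_prime hq]
  ring

lemma sigmaPlus_p3 {p : ℕ} (hp : p.Prime) : sigmaPlus (p ^ 3) = 2 + p + p ^ 2 + p ^ 3 := by
  unfold sigmaPlus
  rw [Nat.primeFactors_prime_pow (by norm_num) hp, Finset.prod_singleton,
    hp.factorization_pow, Finsupp.single_apply, if_pos rfl, sigma_cube hp]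
  ring

theorem stmt_4 : ¬ ∃ p q : ℕ, p.Prime ∧ q.Prime ∧ sigmaPlus (p ^ 2 * q) = 2 * (p ^ 2 * q + 1) := by
  rintro ⟨p, q, hp, hq, h⟩
  have hp2 := hp.two_le
  have hq2 := hq.two_le
  by_cases hne : p = q
  · subst hne
    rw [show p ^ 2 * p = p ^ 3 by ring, sigmaPlus_p3 hp] at h
    nlinarith
  · rw [sigmaPlus_p2q hp hq hne] at h
    -- pass to integers
    have h' : ((2 : ℤ) + p + p ^ 2) * (2 + q) = 2 * ((p : ℤ) ^ 2 * q + 1) := by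
      exact_mod_cast h
    have hdvd : ((p : ℤ) + 1) ∣ 2 := by
      have : ((p : ℤ) + 1) ∣ (q : ℤ) * ((p : ℤ) - 2) * ((p : ℤ) + 1) := ⟨q * (p - 2), by ring⟩
      have heq : (q : ℤ) * ((p : ℤ) - 2) * ((p : ℤ) + 1) = 2 * ((p : ℤ) * ((p : ℤ) + 1)) + 2 := by
        nlinarith [h']
      rw [heq] at this
      have := (Int.dvd_add_right ⟨2 * p, by ring⟩).mp this
      exact this
    have := Int.le_of_dvd (by norm_num) hdvd
    have : (p : ℤ) ≥ 2 := by exact_mod_cast hp2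
    omega
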